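/- Let f be holomorphic on the half-plane ℍ = {Re z < 1}, a ∈ (0,1), λ ≠ 0, with f(az + 1 - a) = λ f(z) on ℍ. If g is holomorphic on 𝔻 and agrees with f on 𝔻, then f is the unique holomorphic extension of g to ℍ; conversely, any holomorphic g on 𝔻 satisfying g(az+1-a) = λ g(z) on 𝔻 extends holomorphically to ℍ via the formula f(z) = λ^{-n} g(a^n z + 1 - a^n) on the disk 𝔻_n = {|z - (1-a^{-n})| < a^{-n}}, and these formulas are consistent on overlaps. -/

import Mathlib

/-- Any holomorphic `g` on 𝔻 with `g ∘ φ_a = λ g` (`λ ≠ 0`) extends holomorphically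
to `ℍ = {Re z < 1}` via `f(z) = λ^{-n} g(a^n z + 1 - a^n)` on the disks
`𝔻_n = {|z - (1 - a^{-n})| < a^{-n}}`, and this extension is unique. -/
theorem eigenvector_extension (a : ℝ) (ha : a ∈ Set.Ioo (0:ℝ) 1)
    (lam : ℂ) (hlam : lam ≠ 0) (g : ℂ → ℂ)
    (hg : DifferentiableOn ℂ g (Metric.ball (0:ℂ) 1))
    (heq : ∀ z ∈ Metric.ball (0:ℂ) 1, g ((a:ℂ) * z + (1 - a)) = lam * g z) :
    ∃ f : ℂ → ℂ,
      DifferentiableOn ℂ f {z : ℂ | z.re < 1} ∧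
      (∀ z ∈ Metric.ball (0:ℂ) 1, f z = g z) ∧
      (∀ n : ℕ, ∀ z ∈ Metric.ball ((1:ℂ) - ((a⁻¹:ℝ)^n : ℝ)) ((a⁻¹:ℝ)^n),
        f z = lam⁻¹ ^ n * g ((a:ℂ)^n * z + 1 - (a:ℂ)^n)) ∧
      (∀ f' : ℂ → ℂ, DifferentiableOn ℂ f' {z : ℂ | z.re < 1} →
        (∀ z ∈ Metric.ball (0:ℂ) 1, f' z = g z) →
        ∀ z ∈ {z : ℂ | z.re < 1}, f' z = f z) := by
  obtain ⟨ha0, ha1⟩ := ha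
  set F : ℕ → ℂ → ℂ := fun n z => lam⁻¹ ^ n * g ((a:ℂ)^n * z + 1 - (a:ℂ)^n) with hFdef
  set D : ℕ → Set ℂ := fun n =>
    Metric.ball ((1:ℂ) - ((a⁻¹:ℝ)^n : ℝ)) ((a⁻¹:ℝ)^n) with hDdef
  have han : ∀ n : ℕ, (0:ℝ) < a ^ n := fun n => pow_pos ha0 n
  have haC : ∀ n : ℕ, ((a:ℂ))^n ≠ 0 := by
    intro n; exact pow_ne_zero _ (by exact_mod_cast ne_of_gt ha0)
  have habs : ∀ n : ℕ, ‖(a:ℂ)^n‖ = a ^ n := by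
    intro n
    rw [norm_pow, Complex.norm_of_nonneg ha0.le]
  -- membership characterization
  have hmem : ∀ (n : ℕ) (z : ℂ),
      z ∈ D n ↔ (a:ℂ)^n * z + 1 - (a:ℂ)^n ∈ Metric.ball (0:ℂ) 1 := by
    intro n z
    have key : ‖(a:ℂ)^n * z + 1 - (a:ℂ)^n‖
        = a^n * ‖z - ((1:ℂ) - ((a⁻¹:ℝ)^n : ℝ))‖ := by
      rw [← habs n, ← norm_mul]
      congr 1
      have hinv : ((a⁻¹ ^ n : ℝ) : ℂ) = ((a:ℂ)^n)⁻¹ := by push_cast; rw [inv_pow]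
      rw [hinv, mul_sub, mul_sub, mul_inv_cancel₀ (haC n)]
      ring
    simp only [hDdef, Metric.mem_ball, dist_zero_right, Complex.dist_eq,
      key]
    rw [mul_comm, ← lt_div_iff₀ (han n), inv_pow, one_div]
  -- the affine recursion
  have hw : ∀ (n : ℕ) (z : ℂ), (a:ℂ)^(n+1) * z + 1 - (a:ℂ)^(n+1)
      = (a:ℂ) * ((a:ℂ)^n * z + 1 - (a:ℂ)^n) + (1 - (a:ℂ)) := by
    intro n z; ring
  -- consistency of successive formulas
  have hcons : ∀ (n : ℕ) (z : ℂ), z ∈ D n → F (n+1) z = F n z := by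
    intro n z hz
    have hball := (hmem n z).mp hz
    simp only [hFdef]
    rw [hw n z, heq _ hball, pow_succ]
    field_simp
  -- disks are increasing
  have hDsub : ∀ n : ℕ, D n ⊆ D (n+1) := by
    intro n z hz
    rw [hmem] at hz ⊢
    rw [hw n z]
    simp only [Metric.mem_ball, dist_zero_right] at hz ⊢
    calc ‖(a:ℂ) * ((a:ℂ)^n * z + 1 - (a:ℂ)^n) + (1 - (a:ℂ))‖
        ≤ ‖(a:ℂ) * ((a:ℂ)^n * z + 1 - (a:ℂ)^n)‖ + ‖1 - (a:ℂ)‖ :=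
          norm_add_le _ _
      _ = a * ‖(a:ℂ)^n * z + 1 - (a:ℂ)^n‖ + (1 - a) := by
          rw [norm_mul]
          have h1 : ‖((a:ℂ))‖ = a := Complex.norm_of_nonneg ha0.le
          have h2 : ((1:ℂ) - (a:ℂ)) = ((1 - a : ℝ) : ℂ) := by push_cast; ring
          rw [h1, h2, Complex.norm_of_nonneg (by linarith)]
      _ < a * 1 + (1 - a) := by
          have := mul_lt_mul_of_pos_left hz ha0
          linarith
      _ = 1 := by ring
  have hDsub' : ∀ k n : ℕ, k ≤ n → D k ⊆ D n := by
    intro k n hkn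
    induction n with
    | zero => simp_all
    | succ m ih =>
      rcases Nat.lt_or_ge k (m+1) with h | h
      · exact (ih (Nat.lt_succ_iff.mp h)).trans (hDsub m)
      · have : k = m + 1 := le_antisymm hkn h
        subst this; exact subset_rfl
  -- chained consistency
  have hchain : ∀ (k n : ℕ), k ≤ n → ∀ z ∈ D k, F n z = F k z := by
    intro k n hkn
    induction n with
    | zero =>
      have : k = 0 := Nat.le_zero.mp hkn
      subst this; intro z _; rfl
    | succ m ih =>
      intro z hz
      rcases Nat.lt_or_ge k (m+1) with h | h
      · have hkm : k ≤ m := Nat.lt_succ_iff.mp h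
        rw [hcons m z (hDsub' k m hkm hz), ih hkm z hz]
      · have : k = m + 1 := le_antisymm hkn h
        subst this; rfl
  -- exhaustion
  have hex : ∀ z : ℂ, z.re < 1 → ∃ n, z ∈ D n := by
    intro z hz
    have hre : (z - 1).re < 0 := by simp [Complex.sub_re]; linarith
    obtain ⟨n, hn⟩ : ∃ n : ℕ, ‖z - 1‖ ^ 2 / (-(2 * (z - 1).re)) < (a⁻¹) ^ n := by
      exact pow_unbounded_of_one_lt
        (‖z - 1‖ ^ 2 / (-(2 * (z - 1).re))) ((one_lt_inv₀ ha0).mpr ha1)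
    refine ⟨n, ?_⟩
    set r : ℝ := (a⁻¹) ^ n with hr
    have hrpos : 0 < r := pow_pos (inv_pos.mpr ha0) n
    have hkey : ‖z - 1‖ ^ 2 < -(2 * (z - 1).re) * r := by
      rw [div_lt_iff₀ (by linarith [mul_neg_of_pos_of_neg two_pos hre])] at hn
      linarith [hn]
    simp only [hDdef, Metric.mem_ball, Complex.dist_eq]
    have hsq : ‖z - ((1:ℂ) - (r:ℝ))‖ ^ 2
        = ‖z - 1‖ ^ 2 + 2 * r * (z - 1).re + r ^ 2 := by
      have h1 : z - ((1:ℂ) - (r:ℝ)) = (z - 1) + (r:ℂ) := by push_cast; ring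
      rw [h1, ← Complex.normSq_eq_norm_sq, ← Complex.normSq_eq_norm_sq]
      simp [Complex.normSq_apply, Complex.add_re, Complex.add_im]
      ring
    have hlt : ‖z - ((1:ℂ) - (r:ℝ))‖ ^ 2 < r ^ 2 := by
      rw [hsq]; nlinarith
    exact lt_of_pow_lt_pow_left₀ 2 hrpos.le hlt
  -- definition of f
  classical
  set f : ℂ → ℂ := fun z => if h : ∃ n, z ∈ D n then F (Nat.find h) z else 0 with hfdef
  have hfD : ∀ (n : ℕ) (z : ℂ), z ∈ D n → f z = F n z := by
    intro n z hz
    have h : ∃ m, z ∈ D m := ⟨n, hz⟩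
    simp only [hfdef, dif_pos h]
    exact (hchain (Nat.find h) n (Nat.find_min' h hz) z (Nat.find_spec h)).symm
  -- F n is differentiable on D n
  have hFdiff : ∀ n : ℕ, DifferentiableOn ℂ (F n) (D n) := by
    intro n
    apply DifferentiableOn.const_mul
    apply hg.comp
    · exact ((differentiable_id.const_mul _).add_const _).sub_const _ |>.differentiableOn
    · intro z hz; exact (hmem n z).mp hz
  have hDopen : ∀ n : ℕ, IsOpen (D n) := fun n => Metric.isOpen_ball
  refine ⟨f, ?_, ?_, ?_, ?_⟩
  · -- differentiability
    intro z hz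
    obtain ⟨n, hzn⟩ := hex z hz
    have h1 : DifferentiableAt ℂ (F n) z :=
      ((hFdiff n) z hzn).differentiableAt ((hDopen n).mem_nhds hzn)
    have h2 : f =ᶠ[nhds z] F n :=
      Filter.eventuallyEq_of_mem ((hDopen n).mem_nhds hzn) (fun w hw => hfD n w hw)
    exact (h1.congr_of_eventuallyEq h2).differentiableWithinAt
  · -- agrees with g on the unit disk
    intro z hz
    have hz0 : z ∈ D 0 := by
      rw [hmem]; simpa using hz
    rw [hfD 0 z hz0]
    simp [hFdef]
  · -- the formulas
    intro n z hz
    exact hfD n z hz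
  · -- uniqueness
    intro f' hf' hf'g z hz
    have hopen : IsOpen {z : ℂ | z.re < 1} :=
      isOpen_lt Complex.continuous_re continuous_const
    have hconn : IsPreconnected {z : ℂ | z.re < 1} :=
      (convex_halfSpace_re_lt 1).isPreconnected
    have hfdiff : DifferentiableOn ℂ f {z : ℂ | z.re < 1} := by
      intro w hw
      obtain ⟨n, hwn⟩ := hex w hw
      have h1 : DifferentiableAt ℂ (F n) w :=
        ((hFdiff n) w hwn).differentiableAt ((hDopen n).mem_nhds hwn)
      have h2 : f =ᶠ[nhds w] F n :=
        Filter.eventuallyEq_of_mem ((hDopen n).mem_nhds hwn) (fun u hu => hfD n u hu)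
      exact (h1.congr_of_eventuallyEq h2).differentiableWithinAt
    have hA : AnalyticOnNhd ℂ f' {z : ℂ | z.re < 1} := hf'.analyticOnNhd hopen
    have hB : AnalyticOnNhd ℂ f {z : ℂ | z.re < 1} := hfdiff.analyticOnNhd hopen
    have h0 : (0:ℂ) ∈ {z : ℂ | z.re < 1} := by simp
    have hev : f' =ᶠ[nhds (0:ℂ)] f := by
      apply Filter.eventuallyEq_of_mem (Metric.isOpen_ball.mem_nhds (Metric.mem_ball_self one_pos))
      intro w hw
      rw [hf'g w hw]
      have hw0 : w ∈ D 0 := by rw [hmem]; simpa using hw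
      rw [hfD 0 w hw0]
      simp [hFdef]
    exact hA.eqOn_of_preconnected_of_eventuallyEq hB hconn h0 hev hz
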